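/- arXiv:0904.0968 — 2 statements merged into one kernel-verified Lean document; each statement's English description precedes it below -/
import Mathlib

section
/- For the Tits form q of the extended Dynkin graph D̃4 (center 0, leaves 1,…,4), every integer vector α with q(α) ≤ 1 and α ≠ 0 is either positive (all coordinates ≥ 0) or negative (all coordinates ≤ 0). -/
/-- Tits form of the extended Dynkin graph D̃₄ (center = vertex 0, leaves = 1,2,3,4). -/
def qD4Z (x : Fin 5 → ℤ) : ℤ :=
  (∑ i, x i ^ 2) - x 0 * (x 1 + x 2 + x 3 + x 4)

lemma int_sq_facts (x : ℤ) : ∃ s : ℤ, x^2 = s ∧ x ≤ s ∧ -x ≤ s ∧ 0 ≤ s := by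
  refine ⟨x^2, rfl, ?_, ?_, sq_nonneg x⟩
  · rcases le_or_gt x 0 with h | h
    · nlinarith [sq_nonneg x]
    · have : 1 ≤ x := h
      nlinarith
  · rcases le_or_gt 0 x with h | h
    · nlinarith [sq_nonneg x]
    · have : x ≤ -1 := by omega
      nlinarith

lemma key (a0 a1 a2 a3 a4 : ℤ)
    (H : a0^2 + a1^2 + a2^2 + a3^2 + a4^2 - a0*(a1+a2+a3+a4) ≤ 1) :
    (0 ≤ a0 ∧ 0 ≤ a1 ∧ 0 ≤ a2 ∧ 0 ≤ a3 ∧ 0 ≤ a4) ∨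
    (a0 ≤ 0 ∧ a1 ≤ 0 ∧ a2 ≤ 0 ∧ a3 ≤ 0 ∧ a4 ≤ 0) := by
  have h4 : (2*a1 - a0)^2 + (2*a2 - a0)^2 + (2*a3 - a0)^2 + (2*a4 - a0)^2 ≤ 4 := by
    nlinarith [H]
  have h1 : (2*a1 - a0)^2 ≤ 4 := by nlinarith [sq_nonneg (2*a2 - a0), sq_nonneg (2*a3 - a0), sq_nonneg (2*a4 - a0)]
  have h2 : (2*a2 - a0)^2 ≤ 4 := by nlinarith [sq_nonneg (2*a1 - a0), sq_nonneg (2*a3 - a0), sq_nonneg (2*a4 - a0)]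
  have h3 : (2*a3 - a0)^2 ≤ 4 := by nlinarith [sq_nonneg (2*a1 - a0), sq_nonneg (2*a2 - a0), sq_nonneg (2*a4 - a0)]
  have h4' : (2*a4 - a0)^2 ≤ 4 := by nlinarith [sq_nonneg (2*a1 - a0), sq_nonneg (2*a2 - a0), sq_nonneg (2*a3 - a0)]
  rcases lt_trichotomy a0 0 with hlt | heq | hgt
  · right
    refine ⟨le_of_lt hlt, ?_, ?_, ?_, ?_⟩ <;> nlinarith
  · subst heq
    have hs : a1^2 + a2^2 + a3^2 + a4^2 ≤ 1 := by nlinarith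
    obtain ⟨s1, e1, p1, q1, n1⟩ := int_sq_facts a1
    obtain ⟨s2, e2, p2, q2, n2⟩ := int_sq_facts a2
    obtain ⟨s3, e3, p3, q3, n3⟩ := int_sq_facts a3
    obtain ⟨s4, e4, p4, q4, n4⟩ := int_sq_facts a4
    rw [e1, e2, e3, e4] at hs
    omega
  · left
    refine ⟨le_of_lt hgt, ?_, ?_, ?_, ?_⟩ <;> nlinarith

theorem stmt1 (α : Fin 5 → ℤ) (hne : α ≠ 0) (hroot : qD4Z α ≤ 1) :
    (∀ i, 0 ≤ α i) ∨ (∀ i, α i ≤ 0) := by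
  have H : α 0^2 + α 1^2 + α 2^2 + α 3^2 + α 4^2 - α 0*(α 1+α 2+α 3+α 4) ≤ 1 := by
    simpa [qD4Z, Fin.sum_univ_five] using hroot
  rcases key (α 0) (α 1) (α 2) (α 3) (α 4) H with ⟨h0,h1,h2,h3,h4⟩ | ⟨h0,h1,h2,h3,h4⟩
  · left; intro i; fin_cases i <;> assumption
  · right; intro i; fin_cases i <;> assumption
end

section
/- For the extended Dynkin graph Ẽ6, the linear functional ω(α_1,α_2;β_1,β_2;γ_1,γ_2) = (α_1+α_2+β_1+β_2+γ_1+γ_2)/3 is invariant with respect to the functor TS on reduced characters: if S maps (χ,λ) to (χ',λ') with λ' = α_1 + β_1 + γ_1 − λ and χ' obtained by the rule χ' = (α_1−α_0, α_1−α_2; β_1−β_0, β_1−β_2; γ_1−γ_0, γ_1−γ_2) with α_0 = β_0 = γ_0 = 0, and T maps (χ',λ') to (χ'',λ') with χ'' = (λ'−α'_2, λ'−α'_1; λ'−β'_2, λ'−β'_1; λ'−γ'_2, λ'−γ'_1), then ω(χ'') = λ' whenever λ = ω(χ). -/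
/-- Invariance of the functional ω for Ẽ₆ under the induced action TS of the Coxeter
functors on reduced characters: with λ = ω(χ), S sends (χ,λ) to (χ',λ') with
λ' = α₁+β₁+γ₁−λ and χ' = (α₁−α₀, α₁−α₂; β₁−β₀, β₁−β₂; γ₁−γ₀, γ₁−γ₂) (α₀=β₀=γ₀=0),
and T sends (χ',λ') to (χ'',λ') with
χ'' = (λ'−α'₂, λ'−α'₁; λ'−β'₂, λ'−β'₁; λ'−γ'₂, λ'−γ'₁); then ω(χ'') = λ'. -/
theorem stmt15 (a1 a2 b1 b2 c1 c2 lam : ℝ)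
    (ha : 0 < a2 ∧ a2 < a1) (hb : 0 < b2 ∧ b2 < b1) (hc : 0 < c2 ∧ c2 < c1)
    (hlam : lam = (a1 + a2 + b1 + b2 + c1 + c2) / 3)
    (lam' a1' a2' b1' b2' c1' c2' : ℝ)
    (hlam' : lam' = a1 + b1 + c1 - lam)
    (ha1' : a1' = a1 - 0) (ha2' : a2' = a1 - a2)
    (hb1' : b1' = b1 - 0) (hb2' : b2' = b1 - b2)
    (hc1' : c1' = c1 - 0) (hc2' : c2' = c1 - c2)
    (a1'' a2'' b1'' b2'' c1'' c2'' : ℝ)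
    (ha1'' : a1'' = lam' - a2') (ha2'' : a2'' = lam' - a1')
    (hb1'' : b1'' = lam' - b2') (hb2'' : b2'' = lam' - b1')
    (hc1'' : c1'' = lam' - c2') (hc2'' : c2'' = lam' - c1') :
    (a1'' + a2'' + b1'' + b2'' + c1'' + c2'') / 3 = lam' := by
  subst_vars; ring
end
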